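/- For p ∈ B_n, each of the elements c₁ = Δ_{n+1}², c₂ = d(p) σ₂⁻¹ ⋯ σ_n⁻¹, and c₃ = σ₁ ⋯ σ_{n−1} σ_n² σ_{n−1} ⋯ σ₁ lies in the centralizer of d(p) σ₁ δ_{n+1}⁻¹ in B_{n+1}. -/

import Mathlib

/-- Braid relations for the infinite braid group: generator `i : ℕ` represents σ_{i+1}. -/
def braidRelsInf : Set (FreeGroup ℕ) :=
  {r | ∃ i j : ℕ,
    (j = i + 1 ∧ r = FreeGroup.of i * FreeGroup.of j * FreeGroup.of i *
        (FreeGroup.of j * FreeGroup.of i * FreeGroup.of j)⁻¹) ∨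
    (i + 2 ≤ j ∧ r = FreeGroup.of i * FreeGroup.of j * (FreeGroup.of j * FreeGroup.of i)⁻¹)}

/-- The braid group B_∞ on infinitely many strands. -/
abbrev BInf : Type := PresentedGroup braidRelsInf

/-- `sigmaInf i` is the Artin generator σ_{i+1} of `BInf` (0-indexed). -/
def sigmaInf (i : ℕ) : BInf := PresentedGroup.of i

/-- Braid relations on `n` generators: `B n` below is the braid group B_{n+1} on
n+1 strands; the generator `i : Fin n` represents σ_{i+1}. -/
def braidRels (n : ℕ) : Set (FreeGroup (Fin n)) :=
  {r | ∃ i j : Fin n,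
    ((j : ℕ) = (i : ℕ) + 1 ∧ r = FreeGroup.of i * FreeGroup.of j * FreeGroup.of i *
        (FreeGroup.of j * FreeGroup.of i * FreeGroup.of j)⁻¹) ∨
    ((i : ℕ) + 2 ≤ (j : ℕ) ∧ r = FreeGroup.of i * FreeGroup.of j *
        (FreeGroup.of j * FreeGroup.of i)⁻¹)}

/-- `B n` is the braid group on n+1 strands (the paper's B_{n+1}), with n generators. -/
abbrev B (n : ℕ) : Type := PresentedGroup (braidRels n)

/-- `σ i` for `i : Fin n` is the Artin generator σ_{i+1} of `B n` (0-indexed). -/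
def σ {n : ℕ} (i : Fin n) : B n := PresentedGroup.of i

/-- `delta n = σ_n ⋯ σ_1` (the paper's δ_{n+1} when `B n` is the paper's B_{n+1}). -/
def delta (n : ℕ) : B n := ((List.ofFn (fun i : Fin n => σ i)).reverse).prod

/-- `Delta n = (σ_n ⋯ σ_1)(σ_n ⋯ σ_2) ⋯ (σ_n)`, the paper's Δ_{n+1}. -/
def Delta (n : ℕ) : B n :=
  (List.ofFn (fun k : Fin n =>
    (((List.ofFn (fun i : Fin n => σ i)).reverse).take (n - (k : ℕ))).prod)).prod



namespace BraidAux

def sig (n : ℕ) (i : ℕ) : B n := if h : i < n then σ ⟨i, h⟩ else 1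

lemma rel_one {n : ℕ} {r : FreeGroup (Fin n)} (hr : r ∈ braidRels n) :
    PresentedGroup.mk (braidRels n) r = 1 := by
  exact (QuotientGroup.eq_one_iff r).mpr (Subgroup.subset_normalClosure hr)

lemma braid {n : ℕ} (i : ℕ) (h : i + 1 < n) :
    sig n i * sig n (i+1) * sig n i = sig n (i+1) * sig n i * sig n (i+1) := by
  have hi : i < n := Nat.lt_of_succ_lt h
  have hr : (FreeGroup.of (⟨i, hi⟩ : Fin n) * FreeGroup.of (⟨i+1, h⟩ : Fin n) *
      FreeGroup.of ⟨i, hi⟩ * (FreeGroup.of (⟨i+1, h⟩ : Fin n) * FreeGroup.of ⟨i, hi⟩ *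
      FreeGroup.of (⟨i+1, h⟩ : Fin n))⁻¹) ∈ braidRels n :=
    ⟨⟨i, hi⟩, ⟨i+1, h⟩, Or.inl ⟨rfl, rfl⟩⟩
  have := rel_one hr
  simp only [map_mul, map_inv] at this
  have h2 := mul_inv_eq_one.mp this
  simp only [sig, dif_pos hi, dif_pos h]
  exact h2

lemma comm {n : ℕ} {i j : ℕ} (h : i + 2 ≤ j) :
    sig n i * sig n j = sig n j * sig n i := by
  by_cases hj : j < n
  · have hi : i < n := by omega
    have hr : (FreeGroup.of (⟨i, hi⟩ : Fin n) * FreeGroup.of (⟨j, hj⟩ : Fin n) *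
        (FreeGroup.of (⟨j, hj⟩ : Fin n) * FreeGroup.of (⟨i, hi⟩ : Fin n))⁻¹) ∈ braidRels n :=
      ⟨⟨i, hi⟩, ⟨j, hj⟩, Or.inr ⟨h, rfl⟩⟩
    have := rel_one hr
    simp only [map_mul, map_inv] at this
    have h2 := mul_inv_eq_one.mp this
    simp only [sig, dif_pos hi, dif_pos hj]
    exact h2
  · simp only [sig, dif_neg hj, mul_one, one_mul]

/-- ascending word σ_a σ_{a+1} ⋯ σ_{a+l-1} -/
def asc (n : ℕ) : ℕ → ℕ → B n
  | _, 0 => 1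
  | a, l+1 => sig n a * asc n (a+1) l

/-- descending word σ_{a+l-1} ⋯ σ_{a+1} σ_a -/
def desc (n : ℕ) : ℕ → ℕ → B n
  | _, 0 => 1
  | a, l+1 => desc n (a+1) l * sig n a

lemma asc_top {n : ℕ} : ∀ (l a : ℕ), asc n a (l+1) = asc n a l * sig n (a+l)
  | 0, a => by simp [asc]
  | l+1, a => by
    rw [asc, asc_top l (a+1), asc, mul_assoc]
    have : a + 1 + l = a + (l+1) := by omega
    rw [this]

lemma desc_top {n : ℕ} : ∀ (l a : ℕ), desc n a (l+1) = sig n (a+l) * desc n a l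
  | 0, a => by simp [desc]
  | l+1, a => by
    rw [desc, desc_top l (a+1), desc]
    have : a + 1 + l = a + (l+1) := by omega
    rw [this, mul_assoc]

lemma commute_asc {n : ℕ} {c : B n} : ∀ {l a : ℕ}, (∀ k, k < l → Commute c (sig n (a+k))) →
    Commute c (asc n a l)
  | 0, a, _ => by simp only [asc]; exact Commute.one_right c
  | l+1, a, h => by
    rw [asc]
    exact Commute.mul_right (by simpa using h 0 (by omega))
      (commute_asc fun k hk => by
        have := h (k+1) (by omega); rwa [show a + (k+1) = a + 1 + k by omega] at this)

lemma commute_desc {n : ℕ} {c : B n} : ∀ {l a : ℕ}, (∀ k, k < l → Commute c (sig n (a+k))) →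
    Commute c (desc n a l)
  | 0, a, _ => by simp only [desc]; exact Commute.one_right c
  | l+1, a, h => by
    rw [desc]
    exact Commute.mul_right
      (commute_desc fun k hk => by
        have := h (k+1) (by omega); rwa [show a + (k+1) = a + 1 + k by omega] at this)
      (by simpa using h 0 (by omega))

/-- commuting a low generator past a high block -/
lemma comm_lo {n j a : ℕ} (h : j + 2 ≤ a) (l : ℕ) :
    Commute (sig n j) (asc n a l) ∧ Commute (sig n j) (desc n a l) :=
  ⟨commute_asc (fun k _ => comm (n := n) (i := j) (by omega)),
   commute_desc (fun k _ => comm (n := n) (i := j) (by omega))⟩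

/-- commuting a high generator past a low block -/
lemma comm_hi {n j a l : ℕ} (h : a + l + 1 ≤ j) :
    Commute (sig n j) (asc n a l) ∧ Commute (sig n j) (desc n a l) :=
  ⟨commute_asc (fun k hk => Commute.symm (comm (n := n) (i := a+k) (j := j) (by omega))),
   commute_desc (fun k hk => Commute.symm (comm (n := n) (i := a+k) (j := j) (by omega)))⟩



lemma mul2_congr {G : Type*} [Group G] {x y x' y' : G} (h : x*y = x'*y') (c : G) :
    x*(y*c) = x'*(y'*c) := by rw [← mul_assoc, h, mul_assoc]

lemma mul3_congr {G : Type*} [Group G] {x y z x' y' z' : G} (h : x*y*z = x'*y'*z') (c : G) :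
    x*(y*(z*c)) = x'*(y'*(z'*c)) := by
  rw [← mul_assoc, ← mul_assoc, h, mul_assoc, mul_assoc]

/-- Lemma A: slide a generator through a descending run -/
lemma slide_desc {n : ℕ} : ∀ (l a j : ℕ), a ≤ j → j + 2 ≤ a + l → a + l ≤ n →
    sig n j * desc n a l = desc n a l * sig n (j+1)
  | 0, a, j, h1, h2, _ => by omega
  | 1, a, j, h1, h2, _ => by omega
  | l+2, a, j, h1, h2, hn => by
    rcases Nat.lt_or_ge (j+2) (a+l+2) with hlt | hge
    · -- top letter commutes with sig j, recurse
      rw [desc_top (l+1) a]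
      have hc : sig n j * sig n (a+(l+1)) = sig n (a+(l+1)) * sig n j := comm (by omega)
      rw [← mul_assoc, hc, mul_assoc, slide_desc (l+1) a j h1 (by omega) (by omega),
        ← mul_assoc]
    · -- j = a + l, braid with the two top letters
      have hj : j = a + l := by omega
      rw [hj, desc_top (l+1) a, desc_top l a]
      have hb := braid (n := n) (a+l) (by omega)
      have hcomm : Commute (sig n (a+l+1)) (desc n a l) :=
        (comm_hi (by omega)).2
      simp only [mul_assoc, show a+(l+1) = a+l+1 from rfl]
      rw [mul3_congr hb (desc n a l), hcomm.eq]

/-- Lemma A': slide a generator through an ascending run -/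
lemma slide_asc {n : ℕ} : ∀ (l a j : ℕ), a ≤ j → j + 2 ≤ a + l → a + l ≤ n →
    asc n a l * sig n j = sig n (j+1) * asc n a l
  | 0, a, j, h1, h2, _ => by omega
  | 1, a, j, h1, h2, _ => by omega
  | l+2, a, j, h1, h2, hn => by
    rcases Nat.lt_or_ge a j with hlt | hge
    · -- j ≥ a+1 : bottom letter commutes
      rw [show asc n a (l+2) = sig n a * asc n (a+1) (l+1) from rfl]
      have hc : sig n a * sig n (j+1) = sig n (j+1) * sig n a := comm (by omega)
      rw [mul_assoc, slide_asc (l+1) (a+1) j (by omega) (by omega) (by omega),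
        ← mul_assoc, hc, mul_assoc]
    · -- j = a
      have hj : j = a := by omega
      rw [hj, show asc n a (l+2) = sig n a * (sig n (a+1) * asc n (a+2) l) from rfl]
      have hb := braid (n := n) a (by omega)
      have hcomm : Commute (sig n a) (asc n (a+2) l) := (comm_lo (by omega) l).1
      simp only [mul_assoc]
      rw [← hcomm.eq, mul3_congr hb (asc n (a+2) l)]

/-- Lemma E: desc (l+1) · asc-shifted l = asc (l+1) · desc l -/
lemma desc_asc_swap {n : ℕ} : ∀ (l a : ℕ), a + l + 1 ≤ n →
    desc n a (l+1) * asc n (a+1) l = asc n a (l+1) * desc n a l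
  | 0, a, _ => by
    simp only [asc, desc, one_mul, mul_one]
  | l+1, a, hn => by
    have hb : sig n (a+l+1) * sig n (a+l) * sig n (a+l+1)
        = sig n (a+l) * sig n (a+l+1) * sig n (a+l) := (braid (n := n) (a+l) (by omega)).symm
    have h1 : Commute (sig n (a+l+1)) (desc n a l) := (comm_hi (by omega)).2
    have h2 : Commute (sig n (a+l+1)) (asc n a l) := (comm_hi (by omega)).1
    have e2 : a+1+l = a+l+1 := by omega
    rw [desc_top (l+1) a, asc_top l (a+1), e2]
    simp only [show a+(l+1) = a+l+1 from rfl, mul_assoc]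
    rw [mul2_congr (desc_asc_swap l a (by omega)) (sig n (a+l+1)),
      asc_top (l+1) a, asc_top l a, desc_top l a]
    simp only [show a+(l+1) = a+l+1 from rfl, mul_assoc]
    rw [h2.left_comm, ← h1.eq, mul3_congr hb (desc n a l)]

/-- The Garside element on generators a, a+1, …, a+l-1. -/
def Gar (n : ℕ) : ℕ → ℕ → B n
  | _, 0 => 1
  | a, l+1 => desc n a (l+1) * Gar n (a+1) l

/-- Lemma D'': alternative ascending decomposition of the Garside element -/
lemma Gar_asc {n : ℕ} : ∀ (l a : ℕ), a + l + 1 ≤ n →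
    Gar n a (l+1) = asc n a (l+1) * Gar n a l
  | 0, a, _ => by
    simp only [Gar, desc, asc, one_mul, mul_one]
  | l+1, a, hn => by
    rw [show Gar n a (l+2) = desc n a (l+2) * Gar n (a+1) (l+1) from rfl,
      Gar_asc l (a+1) (by omega), ← mul_assoc, desc_asc_swap (l+1) a (by omega),
      mul_assoc, show desc n a (l+1) * Gar n (a+1) l = Gar n a (l+1) from rfl]

/-- Lemma C: conjugation by the Garside element flips the generators -/
lemma Gar_conj {n : ℕ} : ∀ (l a i : ℕ), a ≤ i → i < a + l → a + l ≤ n →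
    sig n i * Gar n a l = Gar n a l * sig n (2*a + l - 1 - i)
  | 0, a, i, h1, h2, _ => by omega
  | l+1, a, i, h1, h2, hn => by
    rcases Nat.lt_or_ge i (a+l) with hlt | hge
    · -- i < a + l : use the descending decomposition
      have hl : 1 ≤ l := by omega
      rw [show Gar n a (l+1) = desc n a (l+1) * Gar n (a+1) l from rfl, ← mul_assoc,
        slide_desc (l+1) a i h1 (by omega) (by omega), mul_assoc,
        Gar_conj l (a+1) (i+1) (by omega) (by omega) (by omega), ← mul_assoc]
      congr 2
      omega
    · -- i = a + l : use the ascending decomposition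
      have hi : i = a + l := by omega
      subst hi
      rcases Nat.eq_zero_or_pos l with hl | hl
      · subst hl
        have hg : Gar n a 1 = sig n a := by
          simp only [Gar, desc, one_mul, mul_one]
        have e : 2*a+(0+1)-1-(a+0) = a := by omega
        have e2 : a + 0 = a := by omega
        rw [e, e2, hg]
      · rw [Gar_asc l a (by omega)]
        have hs : sig n (a+l) * asc n a (l+1) = asc n a (l+1) * sig n (a+l-1) := by
          have := slide_asc (n := n) (l+1) a (a+l-1) (by omega) (by omega) (by omega)
          have e : a + l - 1 + 1 = a + l := by omega
          rw [e] at this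
          exact this.symm
        rw [← mul_assoc, hs, mul_assoc,
          Gar_conj l a (a+l-1) (by omega) (by omega) (by omega), ← mul_assoc]
        congr 2
        omega

/-- the full twist of strand 1 around the others: σ_a ⋯ σ_{a+l-1} σ_{a+l-1} ⋯ σ_a -/
def Tw (n a l : ℕ) : B n := asc n a l * desc n a l

lemma Tw_comm {n : ℕ} : ∀ (l a i : ℕ), a + 1 ≤ i → i + 1 ≤ a + l → a + l ≤ n →
    sig n i * Tw n a l = Tw n a l * sig n i
  | 0, a, i, h1, h2, _ => by omega
  | 1, a, i, h1, h2, _ => by omega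
  | l+2, a, i, h1, h2, hn => by
    have hTw : Tw n a (l+2) = sig n a * Tw n (a+1) (l+1) * sig n a := by
      show asc n a (l+2) * desc n a (l+2) = _
      rw [show asc n a (l+2) = sig n a * asc n (a+1) (l+1) from rfl,
        show desc n a (l+2) = desc n (a+1) (l+1) * sig n a from rfl, Tw]
      group
    rcases Nat.lt_or_ge (a+1) i with hlt | hge
    · -- i ≥ a + 2
      have hc : Commute (sig n i) (sig n a) := Commute.symm (comm (by omega))
      have hT : Commute (sig n i) (Tw n (a+1) (l+1)) :=
        Tw_comm (l+1) (a+1) i (by omega) (by omega) (by omega)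
      rw [hTw]
      simp only [mul_assoc]
      rw [hc.left_comm, hT.left_comm, hc.eq]
    · -- i = a + 1
      have hi : i = a + 1 := by omega
      rw [hi]
      have hTw' : Tw n (a+1) (l+1) = sig n (a+1) * Tw n (a+2) l * sig n (a+1) := by
        show asc n (a+1) (l+1) * desc n (a+1) (l+1) = _
        rw [show asc n (a+1) (l+1) = sig n (a+1) * asc n (a+2) l from rfl,
          show desc n (a+1) (l+1) = desc n (a+2) l * sig n (a+1) from rfl, Tw]
        group
      have hb := braid (n := n) a (by omega)
      have hb' : sig n (a+1) * sig n a * sig n (a+1) = sig n a * sig n (a+1) * sig n a := hb.symm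
      have hc1 : Commute (sig n a) (Tw n (a+2) l) :=
        Commute.mul_right ((comm_lo (by omega) l).1) ((comm_lo (by omega) l).2)
      have hb3 : sig n a * (sig n (a+1) * sig n a) = sig n (a+1) * (sig n a * sig n (a+1)) := by
        rw [← mul_assoc, hb, mul_assoc]
      rw [hTw, hTw']
      simp only [mul_assoc]
      rw [mul3_congr hb' (Tw n (a+2) l * (sig n (a+1) * sig n a)), hc1.left_comm, hb3]


lemma asc_eq_prod {n : ℕ} : ∀ (l a : ℕ), asc n a l = ((List.range' a l).map (sig n)).prod
  | 0, a => by simp [asc]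
  | l+1, a => by
    rw [List.range'_succ, List.map_cons, List.prod_cons, ← asc_eq_prod l (a+1)]
    rfl

lemma desc_eq_prod {n : ℕ} : ∀ (l a : ℕ),
    desc n a l = (((List.range' a l).map (sig n)).reverse).prod
  | 0, a => by simp [desc]
  | l+1, a => by
    rw [List.range'_succ, List.map_cons, List.reverse_cons, List.prod_append,
      ← desc_eq_prod l (a+1)]
    simp [desc]

lemma gens_eq (n : ℕ) : (List.ofFn (fun i : Fin n => σ i)) = (List.range' 0 n).map (sig n) := by
  apply List.ext_getElem
  · simp
  · intro i h1 h2
    have hi : i < n := by simpa using h1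
    simp only [List.getElem_ofFn, List.getElem_map, List.getElem_range',
      Nat.zero_add, Nat.one_mul, sig, dif_pos hi]

lemma prod_map_inv {G : Type*} [Group G] (l : List G) :
    (l.map (fun x => x⁻¹)).prod = (l.reverse.prod)⁻¹ := by
  rw [List.prod_inv_reverse, List.map_reverse, List.reverse_reverse]

lemma take_prod {n : ℕ} (t : ℕ) (ht : t ≤ n) :
    ((((List.range' 0 n).map (sig n)).reverse).take t).prod = desc n (n-t) t := by
  have hsplit : List.range' 0 n = List.range' 0 (n-t) ++ List.range' (n-t) t := by
    have := List.range'_append_1 (s := 0) (m := n-t) (n := t)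
    rw [show 0 + (n-t) = n-t by omega, show (n-t) + t = n by omega] at this
    exact this.symm
  rw [hsplit, List.map_append, List.reverse_append,
    List.take_left' (by simp), desc_eq_prod]

lemma ofFn_gar {n : ℕ} : ∀ (l a : ℕ),
    (List.ofFn (fun k : Fin l => desc n (a + (k : ℕ)) (l - (k : ℕ)))).prod = Gar n a l
  | 0, a => by simp [Gar]
  | l+1, a => by
    rw [List.ofFn_succ, List.prod_cons]
    have he : (fun k : Fin l => desc n (a + ((k.succ : Fin (l+1)) : ℕ)) ((l+1) - ((k.succ : Fin (l+1)) : ℕ)))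
        = (fun k : Fin l => desc n ((a+1) + (k : ℕ)) (l - (k : ℕ))) := by
      funext k
      have hv : ((k.succ : Fin (l+1)) : ℕ) = (k : ℕ) + 1 := Fin.val_succ k
      rw [hv, show a + ((k:ℕ)+1) = (a+1)+(k:ℕ) by omega,
        show (l+1) - ((k:ℕ)+1) = l - (k:ℕ) by omega]
    rw [he, ofFn_gar l (a+1)]
    simp only [Fin.val_zero, Nat.add_zero, Nat.sub_zero]
    rfl


lemma delta_eq (n : ℕ) : delta n = desc n 0 n := by
  rw [delta, gens_eq, ← desc_eq_prod]

lemma Delta_eq (n : ℕ) : Delta n = Gar n 0 n := by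
  rw [Delta, ← ofFn_gar n 0]
  have he : (fun k : Fin n => (((List.ofFn (fun i : Fin n => σ i)).reverse).take (n - (k : ℕ))).prod)
      = fun k : Fin n => desc n (0 + (k : ℕ)) (n - (k : ℕ)) := by
    funext k
    have hk := k.isLt
    rw [gens_eq, take_prod (n - (k : ℕ)) (by omega)]
    congr 1
    omega
  rw [he]

/-- Δ² is central. -/
lemma gar_sq_comm {n : ℕ} (x : B n) : x * (Gar n 0 n)^2 = (Gar n 0 n)^2 * x := by
  have key : ∀ i : ℕ, i < n → sig n i * (Gar n 0 n)^2 = (Gar n 0 n)^2 * sig n i := by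
    intro i hi
    have h1 := Gar_conj (n := n) n 0 i (by omega) (by omega) (by omega)
    have h2 := Gar_conj (n := n) n 0 (2*0+n-1-i) (by omega) (by omega) (by omega)
    rw [show 2*0+n-1-(2*0+n-1-i) = i by omega] at h2
    rw [pow_two, ← mul_assoc, h1, mul_assoc, h2, ← mul_assoc]
  have : x ∈ Subgroup.centralizer {(Gar n 0 n)^2} := by
    apply PresentedGroup.generated_by
    intro j
    rw [Subgroup.mem_centralizer_singleton_iff]
    have : (PresentedGroup.of j : B n) = sig n (j : ℕ) := by
      simp [sig, dif_pos j.isLt, σ]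
    rw [this]
    exact key j j.isLt
  exact Subgroup.mem_centralizer_singleton_iff.mp this

end BraidAux


open BraidAux

/-- Proposition 3, first part. With `B (m+1)` the paper's B_{n+1}
(n = m+1), `B m` the paper's B_n and `d` the shift homomorphism: for p ∈ B_n,
each of c₁ = Δ_{n+1}², c₂ = d(p)σ₂⁻¹⋯σ_n⁻¹, c₃ = σ₁⋯σ_{n−1}σ_n²σ_{n−1}⋯σ₁
lies in the centralizer of d(p)σ₁δ_{n+1}⁻¹ in B_{n+1}. -/
theorem c1_c2_c3_in_centralizer (m : ℕ) (d : B m →* B (m + 1))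
    (hd : ∀ i : Fin m, d (σ i) = σ i.succ) (p : B m)
    (c₁ c₂ c₃ : B (m + 1))
    (hc₁ : c₁ = (Delta (m + 1)) ^ 2)
    (hc₂ : c₂ = d p *
        (((List.ofFn (fun i : Fin (m + 1) => σ i)).drop 1).map (fun x => x⁻¹)).prod)
    (hc₃ : c₃ = (List.ofFn (fun i : Fin (m + 1) => σ i)).prod *
        ((List.ofFn (fun i : Fin (m + 1) => σ i)).reverse).prod) :
    c₁ ∈ Subgroup.centralizer {d p * σ (0 : Fin (m + 1)) * (delta (m + 1))⁻¹} ∧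
    c₂ ∈ Subgroup.centralizer {d p * σ (0 : Fin (m + 1)) * (delta (m + 1))⁻¹} ∧
    c₃ ∈ Subgroup.centralizer {d p * σ (0 : Fin (m + 1)) * (delta (m + 1))⁻¹} := by
  have hsig0 : σ (0 : Fin (m+1)) = sig (m+1) 0 := by simp [sig, σ]
  have hdelta : delta (m+1) = desc (m+1) 1 m * sig (m+1) 0 := by
    rw [delta_eq]
    rfl
  have hbase : d p * σ (0 : Fin (m+1)) * (delta (m+1))⁻¹ = d p * (desc (m+1) 1 m)⁻¹ := by
    rw [hdelta, hsig0, mul_inv_rev, mul_assoc, ← mul_assoc (sig (m+1) 0), mul_inv_cancel,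
      one_mul]
  have hc3Tw : c₃ = Tw (m+1) 0 (m+1) := by
    rw [hc₃, Tw, gens_eq, ← asc_eq_prod, ← desc_eq_prod]
  have hgen : ∀ i : ℕ, 1 ≤ i → i ≤ m → Commute (sig (m+1) i) c₃ := by
    intro i h1 h2
    rw [hc3Tw]
    exact Tw_comm (n := m+1) (m+1) 0 i (by omega) (by omega) (by omega)
  have hdp : Commute (d p) c₃ := by
    have hp : d p ∈ Subgroup.centralizer {c₃} := by
      have := PresentedGroup.generated_by (braidRels m)
        ((Subgroup.centralizer {c₃}).comap d) (fun j => ?_) p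
      · exact this
      · rw [Subgroup.mem_comap, Subgroup.mem_centralizer_singleton_iff]
        have hde : d (PresentedGroup.of j) = σ j.succ := hd j
        have hsj : (σ j.succ : B (m+1)) = sig (m+1) ((j : ℕ)+1) := by
          simp only [sig, dif_pos (show (j:ℕ)+1 < m+1 by omega)]
          rfl
        rw [hde, hsj]
        exact (hgen ((j : ℕ)+1) (by omega) (by omega) : _)
    exact Subgroup.mem_centralizer_singleton_iff.mp hp
  have hdesc : Commute ((desc (m+1) 1 m)⁻¹) c₃ := by
    refine Commute.inv_left ?_
    exact (Commute.symm (commute_desc (fun k hk => (hgen (1+k) (by omega) (by omega)).symm)))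
  have hgc3 : Commute (d p * σ (0 : Fin (m+1)) * (delta (m+1))⁻¹) c₃ := by
    rw [hbase]
    exact Commute.mul_left hdp hdesc
  have hc2eq : c₂ = d p * σ (0 : Fin (m+1)) * (delta (m+1))⁻¹ := by
    rw [hbase, hc₂]
    congr 1
    have hr : List.range' 0 (m+1) = 0 :: List.range' 1 m := by simp [List.range'_succ]
    rw [gens_eq, hr, List.map_cons, List.drop_one, List.tail_cons, prod_map_inv,
      ← desc_eq_prod]
  refine ⟨?_, ?_, ?_⟩
  · rw [Subgroup.mem_centralizer_singleton_iff, hc₁, Delta_eq]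
    exact (gar_sq_comm _).symm
  · rw [Subgroup.mem_centralizer_singleton_iff, hc2eq]
  · rw [Subgroup.mem_centralizer_singleton_iff]
    exact hgc3.symm.eq
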